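/- Let k ≥ 3 and let G be the group with presentation ⟨a, b | a^{2k} b^{2k} = 1, and a^{2k-i} b^i = 1 and b^{2k-i} a^i = 1 for i = 2 and i = 3⟩. Then a = b in G. -/

import Mathlib

/-- The relations of the presentation
`⟨a, b | a^{2k}b^{2k}, a^{2k-2}b^2, b^{2k-2}a^2, a^{2k-3}b^3, b^{2k-3}a^3⟩`,
where `a = FreeGroup.of 0` and `b = FreeGroup.of 1`. -/
def nestRels (k : ℕ) : Set (FreeGroup (Fin 2)) :=
  { FreeGroup.of 0 ^ (2 * k) * FreeGroup.of 1 ^ (2 * k),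
    FreeGroup.of 0 ^ (2 * k - 2) * FreeGroup.of 1 ^ 2,
    FreeGroup.of 1 ^ (2 * k - 2) * FreeGroup.of 0 ^ 2,
    FreeGroup.of 0 ^ (2 * k - 3) * FreeGroup.of 1 ^ 3,
    FreeGroup.of 1 ^ (2 * k - 3) * FreeGroup.of 0 ^ 3 }

/-- In `G = ⟨a, b | a^{2k}b^{2k} = 1, a^{2k-i}b^i = 1, b^{2k-i}a^i = 1 (i = 2, 3)⟩`
with `k ≥ 3`, one has `a = b`. -/
theorem stmt0 (k : ℕ) (hk : 3 ≤ k) :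
    (PresentedGroup.of 0 : PresentedGroup (nestRels k)) = PresentedGroup.of 1 := by
  have key : ∀ r ∈ nestRels k, (QuotientGroup.mk r : PresentedGroup (nestRels k)) = 1 :=
    fun r hr => (QuotientGroup.eq_one_iff r).2 (Subgroup.subset_normalClosure hr)
  have h2 : (QuotientGroup.mk (FreeGroup.of 0 ^ (2 * k - 2) * FreeGroup.of 1 ^ 2) :
      PresentedGroup (nestRels k)) = 1 := by
    apply key; simp [nestRels]
  have h4 : (QuotientGroup.mk (FreeGroup.of 0 ^ (2 * k - 3) * FreeGroup.of 1 ^ 3) :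
      PresentedGroup (nestRels k)) = 1 := by
    apply key; simp [nestRels]
  set A : PresentedGroup (nestRels k) := PresentedGroup.of 0 with hA
  set B : PresentedGroup (nestRels k) := PresentedGroup.of 1 with hB
  have hA2 : A ^ (2 * k - 2) * B ^ 2 = 1 := by
    simp only [QuotientGroup.mk_mul, QuotientGroup.mk_pow] at h2; exact h2
  have hA3 : A ^ (2 * k - 3) * B ^ 3 = 1 := by
    simp only [QuotientGroup.mk_mul, QuotientGroup.mk_pow] at h4; exact h4
  have hsucc : 2 * k - 2 = (2 * k - 3) + 1 := by omega
  rw [hsucc, pow_succ] at hA2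
  have h1 : A ^ (2 * k - 3) = (B ^ 3)⁻¹ := by
    rw [eq_inv_iff_mul_eq_one]; exact hA3
  rw [h1] at hA2
  calc A = B ^ 3 * ((B ^ 3)⁻¹ * A * B ^ 2) * (B ^ 2)⁻¹ := by group
  _ = B := by rw [hA2]; group
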